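/- Sensitivity under a local change, element inside the basis: Let M be a loopless matroid, x and x' weightings differing only at element e, and B an x-optimal basis with e ∈ B. Then B is x'-optimal if and only if x'(e) ≤ μ_e(x). -/

import Mathlib

open Matroid Set

variable {α : Type*}

/-- A circuit of a matroid: a minimal dependent set. -/
def Matroid.IsPaperCircuit (M : Matroid α) (C : Set α) : Prop :=
  M.Dep C ∧ ∀ ⦃D⦄, D ⊂ C → M.Indep D

/-- Looplessness in the sense of the paper: no element is a loop
(every singleton of the ground set is independent) and no element is a
coloop (no element lies in all bases). -/
def Matroid.PaperLoopless (M : Matroid α) : Prop :=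
  ∀ e ∈ M.E, M.Indep {e} ∧ ∃ B, M.IsBase B ∧ e ∉ B

/-- The weight `x(B)` of a set of ground elements. -/
noncomputable def setWeight (x : α → ℝ) (B : Set α) : ℝ := ∑ᶠ e ∈ B, x e

/-- The min-max weight `μ_e(x)`: the minimum over circuits `C` containing `e`
of the maximum weight of an element of `C - e`. -/
noncomputable def muWeight (M : Matroid α) (x : α → ℝ) (e : α) : ℝ :=
  sInf {w | ∃ C, M.IsPaperCircuit C ∧ e ∈ C ∧ w = sSup (x '' (C \ {e}))}

/-- The bottleneck weight `b_e(x) = min {x(e), μ_e(x)}`. -/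
noncomputable def bottleneck (M : Matroid α) (x : α → ℝ) (e : α) : ℝ :=
  min (x e) (muWeight M x e)

/-- The minimum weight of a basis of `M`. -/
noncomputable def mwb (M : Matroid α) (x : α → ℝ) : ℝ :=
  sInf {w | ∃ B, M.IsBase B ∧ w = setWeight x B}

/-- `B` is an `x`-optimal basis of `M`. -/
def IsOptimalBase (M : Matroid α) (x : α → ℝ) (B : Set α) : Prop :=
  M.IsBase B ∧ ∀ B', M.IsBase B' → setWeight x B ≤ setWeight x B'

/-- Deletion of a single element. -/
noncomputable def Matroid.del (M : Matroid α) (e : α) : Matroid α :=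
  M ↾ (M.E \ {e})

/-- Contraction of a single element, defined by duality: `M/e = (M✶ \ e)✶`. -/
noncomputable def Matroid.con (M : Matroid α) (e : α) : Matroid α :=
  ((M✶ ↾ (M.E \ {e}))✶)

/-! ### Auxiliary lemmas -/

lemma setWeight_insert (x : α → ℝ) {s : Set α} (hs : s.Finite) {a : α} (ha : a ∉ s) :
    setWeight x (insert a s) = x a + setWeight x s :=
  finsum_mem_insert x ha hs

lemma setWeight_split (x : α → ℝ) {s : Set α} (hs : s.Finite) {e : α} (he : e ∈ s) :
    setWeight x s = x e + setWeight x (s \ {e}) := by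
  nth_rewrite 1 [show s = insert e (s \ {e}) by
    rw [insert_diff_singleton, insert_eq_of_mem he]]
  exact setWeight_insert x (hs.diff) (by simp)

lemma setWeight_congr {x x' : α → ℝ} {s : Set α} (h : ∀ f ∈ s, x' f = x f) :
    setWeight x' s = setWeight x s :=
  finsum_mem_congr rfl h

lemma Matroid.IsPaperCircuit.diff_indep {M : Matroid α} {C : Set α} (hC : M.IsPaperCircuit C) {a : α}
    (ha : a ∈ C) : M.Indep (C \ {a}) :=
  hC.2 (sdiff_singleton_ssubset.mpr ha)

lemma Matroid.IsPaperCircuit.mem_closure_diff {M : Matroid α} {C : Set α} (hC : M.IsPaperCircuit C) {a : α}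
    (ha : a ∈ C) : a ∈ M.closure (C \ {a}) := by
  rw [(hC.diff_indep ha).mem_closure_iff_of_notMem (by simp), insert_diff_singleton,
    insert_eq_of_mem ha]
  exact hC.1

/-- Every finite dependent set contains a circuit. -/
lemma exists_circuit_subset_aux (M : Matroid α) :
    ∀ n (D : Set α), D.Finite → D.ncard ≤ n → M.Dep D → ∃ C ⊆ D, M.IsPaperCircuit C := by
  intro n
  induction n with
  | zero =>
    intro D hfin hcard hD
    rw [Nat.le_zero, Set.ncard_eq_zero hfin] at hcard
    subst hcard
    exact absurd M.empty_indep hD.not_indep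
  | succ n ih =>
    intro D hfin hcard hD
    by_cases h : ∀ ⦃D'⦄, D' ⊂ D → M.Indep D'
    · exact ⟨D, subset_rfl, hD, h⟩
    · push_neg at h
      obtain ⟨D', hss, hdep'⟩ := h
      have hd : M.Dep D' := ⟨hdep', hss.subset.trans hD.subset_ground⟩
      have hlt := Set.ncard_lt_ncard hss hfin
      obtain ⟨C, hCD, hC⟩ := ih D' (hfin.subset hss.subset) (by omega) hd
      exact ⟨C, hCD.trans hss.subset, hC⟩

lemma exists_circuit_subset (M : Matroid α) {D : Set α} (hfin : D.Finite) (hD : M.Dep D) :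
    ∃ C ⊆ D, M.IsPaperCircuit C :=
  exists_circuit_subset_aux M D.ncard D hfin le_rfl hD

/-- Forward-direction exchange: for a basis `B` containing `e` and a circuit `C` containing `e`,
there is `f ∈ C - e`, `f ∉ B` with `B - e + f` a basis. -/
lemma exchange_in (M : Matroid α) {B C : Set α} {e : α} (hBb : M.IsBase B)
    (heB : e ∈ B) (hC : M.IsPaperCircuit C) (heC : e ∈ C) :
    ∃ f ∈ C \ {e}, f ∉ B ∧ M.IsBase (insert f (B \ {e})) := by
  have hBi : M.Indep (B \ {e}) := hBb.indep.subset diff_subset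
  have h2 : e ∉ M.closure (B \ {e}) := by
    rw [hBi.notMem_closure_iff_of_notMem (by simp) (hBb.subset_ground heB),
      insert_diff_singleton, insert_eq_of_mem heB]
    exact hBb.indep
  have h3 : e ∈ M.closure (C \ {e}) := hC.mem_closure_diff heC
  have h4 : ¬ (C \ {e} ⊆ M.closure (B \ {e})) := fun h =>
    h2 (closure_subset_closure_of_subset_closure h h3)
  obtain ⟨f, hfC, hfcl⟩ := not_subset.mp h4
  have hfE : f ∈ M.E := hC.1.subset_ground hfC.1
  have hfB : f ∉ B := by
    intro hfB
    exact hfcl (M.subset_closure (B \ {e}) (diff_subset.trans hBb.subset_ground)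
      ⟨hfB, hfC.2⟩)
  have hind : M.Indep (insert f (B \ {e})) := by
    rw [hBi.insert_indep_iff_of_notMem (fun h => hfB h.1)]
    exact ⟨hfE, hfcl⟩
  exact ⟨f, hfC, hfB, hBb.exchange_isBase_of_indep hfB hind⟩

/-- Reverse-direction exchange via the fundamental circuit of `e` w.r.t. `B'`. -/
lemma fund_exchange (M : Matroid α) [M.Finite] {B' : Set α} {e : α} (hB' : M.IsBase B')
    (he : e ∈ M.E) (heB' : e ∉ B') :
    ∃ C, M.IsPaperCircuit C ∧ e ∈ C ∧
      ∀ f ∈ C \ {e}, f ∈ B' ∧ M.IsBase (insert e (B' \ {f})) := by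
  have hdep : M.Dep (insert e B') := hB'.insert_dep ⟨he, heB'⟩
  obtain ⟨C, hCD, hC⟩ := exists_circuit_subset M
    (M.set_finite _ (insert_subset he hB'.subset_ground)) hdep
  have heC : e ∈ C := by
    by_contra h
    exact hC.1.not_indep (hB'.indep.subset fun a ha =>
      ((hCD ha).resolve_left (fun h' => h (h' ▸ ha))))
  refine ⟨C, hC, heC, fun f hf => ?_⟩
  have hfB' : f ∈ B' := (hCD hf.1).resolve_left hf.2
  have hBfi : M.Indep (B' \ {f}) := hB'.indep.subset diff_subset
  have hind : M.Indep (insert e (B' \ {f})) := by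
    rw [hBfi.insert_indep_iff_of_notMem (fun h => heB' h.1)]
    refine ⟨he, fun hecl => ?_⟩
    have hfclC : f ∈ M.closure (C \ {f}) := hC.mem_closure_diff hf.1
    have hsub : C \ {f} ⊆ insert e (B' \ {f}) := by
      rintro a ⟨haC, haf⟩
      rcases hCD haC with h | h
      · exact h ▸ mem_insert _ _
      · exact mem_insert_of_mem _ ⟨h, haf⟩
    have hins : insert e (B' \ {f}) ⊆ M.closure (B' \ {f}) :=
      insert_subset hecl (M.subset_closure _ (diff_subset.trans hB'.subset_ground))
    have h1 : M.closure (C \ {f}) ⊆ M.closure (B' \ {f}) :=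
      (M.closure_subset_closure hsub).trans (closure_subset_closure_of_subset_closure hins)
    have hnot : f ∉ M.closure (B' \ {f}) := by
      rw [hBfi.notMem_closure_iff_of_notMem (by simp) (hB'.subset_ground hfB'),
        insert_diff_singleton, insert_eq_of_mem hfB']
      exact hB'.indep
    exact hnot (h1 hfclC)
  exact ⟨hfB', hB'.exchange_isBase_of_indep heB' hind⟩

/-- local sensitivity for an element inside the optimal basis. -/
theorem stmt15 (M : Matroid α) [M.Finite] (hM : M.PaperLoopless)
    (x x' : α → ℝ) {e : α} (he : e ∈ M.E)
    (hdiff : ∀ f, f ≠ e → x' f = x f)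
    {B : Set α} (hB : IsOptimalBase M x B) (heB : e ∈ B) :
    IsOptimalBase M x' B ↔ x' e ≤ muWeight M x e := by
  classical
  have hEfin := M.ground_finite
  have hSfin : {w | ∃ C, M.IsPaperCircuit C ∧ e ∈ C ∧ w = sSup (x '' (C \ {e}))}.Finite := by
    refine ((hEfin.finite_subsets.image (fun C => sSup (x '' (C \ {e})))).subset ?_)
    rintro w ⟨C, hC, -, rfl⟩
    exact ⟨C, hC.1.subset_ground, rfl⟩
  obtain ⟨hsing, B₀, hB₀, heB₀⟩ := hM e he
  obtain ⟨C₀, hC₀sub, hC₀⟩ := exists_circuit_subset M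
    (M.set_finite _ (insert_subset he hB₀.subset_ground)) (hB₀.insert_dep ⟨he, heB₀⟩)
  have heC₀ : e ∈ C₀ := by
    by_contra h
    exact hC₀.1.not_indep (hB₀.indep.subset fun a ha =>
      ((hC₀sub ha).resolve_left fun h' => h (h' ▸ ha)))
  have hSne : {w | ∃ C, M.IsPaperCircuit C ∧ e ∈ C ∧ w = sSup (x '' (C \ {e}))}.Nonempty :=
    ⟨_, C₀, hC₀, heC₀, rfl⟩
  have hdiffne : ∀ C, M.IsPaperCircuit C → e ∈ C → (C \ {e}).Nonempty := by
    intro C hC heC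
    rw [nonempty_iff_ne_empty]
    intro h
    rw [diff_eq_empty] at h
    have hCe : C = {e} := h.antisymm (singleton_subset_iff.mpr heC)
    exact hC.1.not_indep (hCe ▸ hsing)
  have hBfin : B.Finite := M.set_finite B hB.1.subset_ground
  constructor
  · intro hopt
    rw [muWeight]
    apply le_csInf hSne
    rintro w ⟨C, hC, heC, rfl⟩
    obtain ⟨f, hfC, hfB, hbase⟩ := exchange_in M hB.1 heB hC heC
    have hlee := hopt.2 _ hbase
    have h1 : setWeight x' B = x' e + setWeight x' (B \ {e}) := setWeight_split x' hBfin heB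
    have h2 : setWeight x' (insert f (B \ {e})) = x' f + setWeight x' (B \ {e}) :=
      setWeight_insert x' (hBfin.diff) (fun h => hfB h.1)
    have hxf : x' f = x f := hdiff f hfC.2
    have hCfin : (C \ {e}).Finite := (M.set_finite C hC.1.subset_ground).diff
    have hsup : x f ≤ sSup (x '' (C \ {e})) :=
      le_csSup (hCfin.image x).bddAbove (mem_image_of_mem x hfC)
    rw [h1, h2] at hlee
    linarith
  · intro hle
    refine ⟨hB.1, fun B' hB' => ?_⟩
    have hB'fin : B'.Finite := M.set_finite B' hB'.subset_ground
    by_cases heB' : e ∈ B'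
    · have h1 := setWeight_split x' hBfin heB
      have h2 := setWeight_split x hBfin heB
      have h3 := setWeight_split x' hB'fin heB'
      have h4 := setWeight_split x hB'fin heB'
      have e1 : setWeight x' (B \ {e}) = setWeight x (B \ {e}) :=
        setWeight_congr fun f hf => hdiff f hf.2
      have e2 : setWeight x' (B' \ {e}) = setWeight x (B' \ {e}) :=
        setWeight_congr fun f hf => hdiff f hf.2
      have := hB.2 B' hB'
      linarith
    · obtain ⟨C, hC, heC, hexch⟩ := fund_exchange M hB' he heB'
      have hCfin : (C \ {e}).Finite := (M.set_finite C hC.1.subset_ground).diff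
      have hmu : muWeight M x e ≤ sSup (x '' (C \ {e})) := by
        rw [muWeight]
        exact csInf_le hSfin.bddBelow ⟨C, hC, heC, rfl⟩
      obtain ⟨f, hfC, hxf⟩ := ((hdiffne C hC heC).image x).csSup_mem (hCfin.image x)
      obtain ⟨hfB', hbase⟩ := hexch f hfC
      have hmain := hB.2 _ hbase
      have h1 : setWeight x (insert e (B' \ {f})) = x e + setWeight x (B' \ {f}) :=
        setWeight_insert x (hB'fin.diff) (fun h => heB' h.1)
      have h2 : setWeight x B' = x f + setWeight x (B' \ {f}) := setWeight_split x hB'fin hfB'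
      have h3 : setWeight x B = x e + setWeight x (B \ {e}) := setWeight_split x hBfin heB
      have h4 : setWeight x' B = x' e + setWeight x (B \ {e}) := by
        rw [setWeight_split x' hBfin heB, setWeight_congr fun g hg => hdiff g hg.2]
      have h5 : setWeight x' B' = setWeight x B' :=
        setWeight_congr fun g hg => hdiff g (fun h => heB' (h ▸ hg))
      have hxfe : x' e ≤ x f := by rw [hxf]; exact hle.trans hmu
      rw [h1] at hmain
      linarith
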